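/- For every infinite set A, the bounded lattice M_A whose underlying set is A together with two new elements ⊥ and ⊤, ordered so that the elements of A are pairwise incomparable and ⊥ < a < ⊤ for all a ∈ A, is simple and satisfies Wille's property and has the interpolation property, but is not o.p.c. -/

import Mathlib

universe u

/-- `IsPolyFn L n p` says that `p : (Fin n → L) → L` is an `n`-ary lattice polynomial
function on `L`. -/
inductive IsPolyFn (L : Type u) [Lattice L] (n : ℕ) : ((Fin n → L) → L) → Prop
  | proj (i : Fin n) : IsPolyFn L n fun x => x i
  | const (c : L) : IsPolyFn L n fun _ => c
  | sup {p q : (Fin n → L) → L} : IsPolyFn L n p → IsPolyFn L n q →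
      IsPolyFn L n fun x => p x ⊔ q x
  | inf {p q : (Fin n → L) → L} : IsPolyFn L n p → IsPolyFn L n q →
      IsPolyFn L n fun x => p x ⊓ q x

/-- `r` is a lattice congruence: an equivalence relation compatible with `⊔` and `⊓`. -/
def IsLatticeCongruence (L : Type u) [Lattice L] (r : L → L → Prop) : Prop :=
  Equivalence r ∧
    ∀ a b c d : L, r a b → r c d → r (a ⊔ c) (b ⊔ d) ∧ r (a ⊓ c) (b ⊓ d)

/-- A lattice is simple if its only congruences are equality and the all-relation. -/
def IsSimpleLattice (L : Type u) [Lattice L] : Prop :=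
  ∀ r : L → L → Prop, IsLatticeCongruence L r →
    (∀ x y : L, r x y ↔ x = y) ∨ (∀ x y : L, r x y)

/-- Wille's property: the only regressive join-homomorphisms `L → L` are the identity
and the constant map with value `⊥`. -/
def WilleProperty (L : Type u) [Lattice L] [BoundedOrder L] : Prop :=
  ∀ f : L → L, (∀ x, f x ≤ x) → (∀ x y, f (x ⊔ y) = f x ⊔ f y) →
    f = id ∨ f = fun _ => (⊥ : L)

/-- The lattice `M_A`: the elements of `A` form an antichain, with a bottom and a top
element added. -/
inductive MA (A : Type u) : Type u
  | bot : MA A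
  | mid : A → MA A
  | top : MA A

namespace MA

variable {A : Type u}

/-- The order on `M_A`: `⊥ ≤ x ≤ ⊤`, and distinct elements of `A` are incomparable. -/
protected def le : MA A → MA A → Prop
  | bot, _ => True
  | _, top => True
  | mid a, mid b => a = b
  | top, _ => False
  | mid _, bot => False

instance : PartialOrder (MA A) where
  le := MA.le
  le_refl x := by cases x <;> trivial
  le_trans x y z h₁ h₂ := by
    cases x <;> cases y <;> cases z <;> simp_all [MA.le]
  le_antisymm x y h₁ h₂ := by
    cases x <;> cases y <;> simp_all [MA.le]

open Classical in
noncomputable instance : Lattice (MA A) where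
  sup x y := if MA.le x y then y else if MA.le y x then x else top
  le_sup_left x y := by
    cases x <;> cases y <;> simp_all [MA.le, LE.le] <;> split_ifs <;> simp_all [MA.le] <;>
      split_ifs <;> simp_all [MA.le]
  le_sup_right x y := by
    cases x <;> cases y <;> simp_all [MA.le, LE.le] <;> split_ifs <;> simp_all [MA.le] <;>
      split_ifs <;> simp_all [MA.le]
  sup_le x y z h₁ h₂ := by
    cases x <;> cases y <;> cases z <;> simp_all [MA.le, LE.le] <;>
      split_ifs <;> simp_all [MA.le] <;> split_ifs <;> simp_all [MA.le]
  inf x y := if MA.le x y then x else if MA.le y x then y else bot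
  inf_le_left x y := by
    cases x <;> cases y <;> simp_all [MA.le, LE.le] <;> split_ifs <;> simp_all [MA.le] <;>
      split_ifs <;> simp_all [MA.le]
  inf_le_right x y := by
    cases x <;> cases y <;> simp_all [MA.le, LE.le] <;> split_ifs <;> simp_all [MA.le] <;>
      split_ifs <;> simp_all [MA.le]
  le_inf x y z h₁ h₂ := by
    cases x <;> cases y <;> cases z <;> simp_all [MA.le, LE.le] <;>
      split_ifs <;> simp_all [MA.le]

instance : BoundedOrder (MA A) where
  top := top
  bot := bot
  le_top x := by cases x <;> trivial
  bot_le x := by cases x <;> trivial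

end MA


namespace MA
variable {A : Type u}

lemma le_iff {x y : MA A} : x ≤ y ↔ MA.le x y := Iff.rfl

lemma top_def : (⊤ : MA A) = top := rfl
lemma bot_def : (⊥ : MA A) = bot := rfl

open Classical in
lemma sup_def (x y : MA A) :
    x ⊔ y = if MA.le x y then y else if MA.le y x then x else top := rfl

open Classical in
lemma inf_def (x y : MA A) :
    x ⊓ y = if MA.le x y then x else if MA.le y x then y else bot := rfl

lemma mid_sup_mid {a b : A} (h : a ≠ b) : (mid a : MA A) ⊔ mid b = ⊤ := by
  rw [sup_def]; simp [MA.le, h, h.symm, top_def]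

lemma mid_inf_mid {a b : A} (h : a ≠ b) : (mid a : MA A) ⊓ mid b = ⊥ := by
  rw [inf_def]; simp [MA.le, h, h.symm, bot_def]

lemma le_mid_iff {x : MA A} {a : A} : x ≤ mid a ↔ x = ⊥ ∨ x = mid a := by
  cases x <;> simp [le_iff, MA.le, bot_def]

lemma mid_le_mid {a b : A} : (mid a : MA A) ≤ mid b ↔ a = b := Iff.rfl

end MA

namespace MA
variable {A : Type u}

/-! ### map induced by a function on `A` -/

def map (σ : A → A) : MA A → MA A
  | bot => bot
  | top => top
  | mid a => mid (σ a)

lemma map_sup {σ : A → A} (hσ : Function.Injective σ) (x y : MA A) :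
    map σ (x ⊔ y) = map σ x ⊔ map σ y := by
  cases x <;> cases y <;>
    simp only [sup_def, MA.le, map] <;> split_ifs <;> simp_all [map, hσ.eq_iff, MA.le] <;>
      split_ifs <;> simp_all [map, hσ.eq_iff, MA.le]

lemma map_inf {σ : A → A} (hσ : Function.Injective σ) (x y : MA A) :
    map σ (x ⊓ y) = map σ x ⊓ map σ y := by
  cases x <;> cases y <;>
    simp only [inf_def, MA.le, map] <;> split_ifs <;> simp_all [map, hσ.eq_iff, MA.le] <;>
      split_ifs <;> simp_all [map, hσ.eq_iff, MA.le]

lemma poly_comm {n : ℕ} {p : (Fin n → MA A) → MA A} (hp : IsPolyFn (MA A) n p) :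
    ∃ C : Finset A, ∀ σ : A → A, Function.Injective σ → (∀ c ∈ C, σ c = c) →
      ∀ x, p (fun i => map σ (x i)) = map σ (p x) := by
  classical
  induction hp with
  | proj i => exact ⟨∅, fun _ _ _ _ => rfl⟩
  | const c =>
    cases c with
    | bot => exact ⟨∅, fun _ _ _ _ => rfl⟩
    | top => exact ⟨∅, fun _ _ _ _ => rfl⟩
    | mid a =>
      exact ⟨{a}, fun σ hσ hfix x => by simp [map, hfix a (Finset.mem_singleton_self a)]⟩
  | sup hp hq ihp ihq =>
    obtain ⟨C₁, h₁⟩ := ihp; obtain ⟨C₂, h₂⟩ := ihq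
    refine ⟨C₁ ∪ C₂, fun σ hσ hfix x => ?_⟩
    beta_reduce
    rw [h₁ σ hσ (fun c hc => hfix c (Finset.mem_union_left _ hc)) x,
      h₂ σ hσ (fun c hc => hfix c (Finset.mem_union_right _ hc)) x, map_sup hσ]
  | inf hp hq ihp ihq =>
    obtain ⟨C₁, h₁⟩ := ihp; obtain ⟨C₂, h₂⟩ := ihq
    refine ⟨C₁ ∪ C₂, fun σ hσ hfix x => ?_⟩
    beta_reduce
    rw [h₁ σ hσ (fun c hc => hfix c (Finset.mem_union_left _ hc)) x,
      h₂ σ hσ (fun c hc => hfix c (Finset.mem_union_right _ hc)) x, map_inf hσ]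

end MA

namespace MA
variable {A : Type u}

lemma exists_fresh [Infinite A] (s : Finset A) : ∃ a, a ∉ s :=
  Infinite.exists_notMem_finset s

lemma simple [Infinite A] : IsSimpleLattice (MA A) := by
  classical
  intro r ⟨heq, hcomp⟩
  by_cases h : ∀ x y : MA A, r x y ↔ x = y
  · exact Or.inl h
  · right
    -- extract a nontrivial related pair
    push_neg at h
    obtain ⟨x, y, hxy⟩ := h
    have hne : ∃ u v : MA A, u ≠ v ∧ r u v := by
      rcases hxy with ⟨hr, hne⟩ | ⟨hr, he⟩
      · exact ⟨x, y, hne, hr⟩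
      · exact absurd (he ▸ heq.refl x) hr
    obtain ⟨u, v, huv, hruv⟩ := hne
    -- sub-lemmas
    have L1 : ∀ a : A, r ⊥ (mid a) → r ⊥ ⊤ := by
      intro a ha
      obtain ⟨b, hb⟩ := exists_fresh ({a} : Finset A)
      simp only [Finset.mem_singleton] at hb
      obtain ⟨c, hc⟩ := exists_fresh ({a, b} : Finset A)
      simp only [Finset.mem_insert, Finset.mem_singleton, not_or] at hc
      have h1 : r (⊥ ⊔ mid b) (mid a ⊔ mid b) := (hcomp _ _ _ _ ha (heq.refl (mid b))).1
      rw [bot_sup_eq, mid_sup_mid (fun h => hb h.symm)] at h1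
      -- h1 : r (mid b) ⊤
      have h2 : r (mid b ⊓ mid c) (⊤ ⊓ mid c) := (hcomp _ _ _ _ h1 (heq.refl (mid c))).2
      rw [mid_inf_mid (fun h => hc.2 h.symm), top_inf_eq] at h2
      -- h2 : r ⊥ (mid c)
      have h3 : r (mid a) (mid c) := heq.trans (heq.symm ha) h2
      have h4 : r (mid a ⊔ mid a) (mid c ⊔ mid a) := (hcomp _ _ _ _ h3 (heq.refl (mid a))).1
      rw [sup_idem, mid_sup_mid hc.1] at h4
      exact heq.trans ha h4
    have L2 : ∀ a : A, r (mid a) ⊤ → r ⊥ ⊤ := by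
      intro a ha
      obtain ⟨b, hb⟩ := exists_fresh ({a} : Finset A)
      simp only [Finset.mem_singleton] at hb
      have h1 : r (mid a ⊓ mid b) (⊤ ⊓ mid b) := (hcomp _ _ _ _ ha (heq.refl (mid b))).2
      rw [mid_inf_mid (fun h => hb h.symm), top_inf_eq] at h1
      exact L1 b h1
    have L3 : ∀ a b : A, a ≠ b → r (mid a) (mid b) → r ⊥ ⊤ := by
      intro a b hab h
      have h1 : r (mid a ⊔ mid a) (mid b ⊔ mid a) := (hcomp _ _ _ _ h (heq.refl (mid a))).1
      rw [sup_idem, mid_sup_mid (Ne.symm hab)] at h1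
      exact L2 a h1
    have hbt : r ⊥ ⊤ := by
      cases u with
      | bot =>
        cases v with
        | bot => exact absurd rfl huv
        | top => exact hruv
        | mid a => exact L1 a hruv
      | top =>
        cases v with
        | bot => exact heq.symm hruv
        | top => exact absurd rfl huv
        | mid a => exact L2 a (heq.symm hruv)
      | mid a =>
        cases v with
        | bot => exact L1 a (heq.symm hruv)
        | top => exact L2 a hruv
        | mid b =>
          exact L3 a b (fun h => huv (by rw [h])) hruv
    have hall : ∀ x : MA A, r x ⊤ := by
      intro z
      have := (hcomp _ _ _ _ hbt (heq.refl z)).1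
      rwa [bot_sup_eq, top_sup_eq] at this
    intro x y
    exact heq.trans (hall x) (heq.symm (hall y))

lemma wille [Infinite A] : WilleProperty (MA A) := by
  classical
  intro f hreg hsup
  have hfbot : f ⊥ = ⊥ := le_bot_iff.mp (hreg ⊥)
  have hmono : ∀ x y : MA A, x ≤ y → f x ≤ f y := by
    intro x y hxy
    have : f (x ⊔ y) = f x ⊔ f y := hsup x y
    rw [sup_eq_right.mpr hxy] at this
    rw [this]; exact le_sup_left
  rcases htop : f ⊤ with _ | c
  <;> try simp only [show (MA.bot : MA A) = ⊥ from rfl, show (MA.top : MA A) = ⊤ from rfl] at htop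
  · -- f ⊤ = ⊥  (MA.bot)
    right
    funext z
    have := hmono z ⊤ le_top
    rw [htop] at this
    exact le_bot_iff.mp this
  · -- f ⊤ = mid c : contradiction
    exfalso
    obtain ⟨a, ha⟩ := exists_fresh ({c} : Finset A)
    simp only [Finset.mem_singleton] at ha
    obtain ⟨b, hb⟩ := exists_fresh ({c, a} : Finset A)
    simp only [Finset.mem_insert, Finset.mem_singleton, not_or] at hb
    have key : ∀ d : A, d ≠ c → f (mid d) = ⊥ := by
      intro d hd
      have h1 : f (mid d) ≤ mid d := hreg _
      have h2 : f (mid d) ≤ mid c := by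
        have := hmono (mid d) ⊤ le_top; rwa [htop] at this
      have := le_inf h1 h2
      rwa [mid_inf_mid hd, le_bot_iff] at this
    have : f ⊤ = ⊥ := by
      rw [show (⊤ : MA A) = mid a ⊔ mid b from (mid_sup_mid (fun h => hb.2 h.symm)).symm,
        hsup, key a ha, key b hb.1, bot_sup_eq]
    rw [htop] at this
    cases this.trans bot_def
  · -- f ⊤ = ⊤  (MA.top)
    left
    funext z
    cases z with
    | bot => exact hfbot
    | top => exact htop
    | mid a =>
      obtain ⟨b, hb⟩ := exists_fresh ({a} : Finset A)
      simp only [Finset.mem_singleton] at hb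
      have hdec : (⊤ : MA A) = f (mid a) ⊔ f (mid b) := by
        rw [← hsup, mid_sup_mid (fun h => hb h.symm), htop]
      have h1 : f (mid a) ≤ mid a := hreg _
      have h2 : f (mid b) ≤ mid b := hreg _
      rcases le_mid_iff.mp h1 with h | h
      · exfalso
        rw [h, bot_sup_eq] at hdec
        have : (⊤ : MA A) ≤ mid b := hdec ▸ h2
        exact this
      · exact h

end MA

namespace MA
variable {A : Type u}

lemma exists_gadget [Infinite A] {n : ℕ} (i : Fin n) (α β : MA A) (h : ¬ α ≤ β) :
    ∃ p : (Fin n → MA A) → MA A, IsPolyFn (MA A) n p ∧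
      (∀ x, x i = α → p x = ⊤) ∧ (∀ x, x i = β → p x = ⊥) := by
  classical
  cases α with
  | bot => exact absurd bot_le h
  | top =>
    cases β with
    | top => exact absurd le_top h
    | bot =>
      obtain ⟨c, hc⟩ := exists_fresh (∅ : Finset A)
      obtain ⟨d, hd⟩ := exists_fresh ({c} : Finset A)
      simp only [Finset.mem_singleton] at hd
      refine ⟨fun x => (x i ⊓ mid c) ⊔ (x i ⊓ mid d),
        ((IsPolyFn.proj i).inf (.const _)).sup ((IsPolyFn.proj i).inf (.const _)),
        fun x hx => ?_, fun x hx => ?_⟩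
      · beta_reduce
        try simp only [← top_def, ← bot_def] at hx
        rw [hx, top_inf_eq, top_inf_eq]; exact mid_sup_mid (fun h => hd h.symm)
      · beta_reduce
        try simp only [← top_def, ← bot_def] at hx
        rw [hx, bot_inf_eq, bot_inf_eq, sup_idem]
    | mid m' =>
      obtain ⟨c, hc⟩ := exists_fresh ({m'} : Finset A)
      simp only [Finset.mem_singleton] at hc
      obtain ⟨d, hd⟩ := exists_fresh ({m', c} : Finset A)
      simp only [Finset.mem_insert, Finset.mem_singleton, not_or] at hd
      refine ⟨fun x => (x i ⊓ mid c) ⊔ (x i ⊓ mid d),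
        ((IsPolyFn.proj i).inf (.const _)).sup ((IsPolyFn.proj i).inf (.const _)),
        fun x hx => ?_, fun x hx => ?_⟩
      · beta_reduce
        try simp only [← top_def, ← bot_def] at hx
        rw [hx, top_inf_eq, top_inf_eq]; exact mid_sup_mid (fun hcd => hd.2 hcd.symm)
      · beta_reduce
        try simp only [← top_def, ← bot_def] at hx
        rw [hx, mid_inf_mid (fun hx => hc hx.symm), mid_inf_mid (fun hx => hd.1 hx.symm),
          bot_sup_eq]
  | mid m =>
    cases β with
    | top => exact absurd le_top h
    | bot =>
      obtain ⟨c, hc⟩ := exists_fresh ({m} : Finset A)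
      simp only [Finset.mem_singleton] at hc
      obtain ⟨d, hd⟩ := exists_fresh ({m, c} : Finset A)
      simp only [Finset.mem_insert, Finset.mem_singleton, not_or] at hd
      refine ⟨fun x => x i ⊔ ((x i ⊔ mid c) ⊓ mid d),
        (IsPolyFn.proj i).sup (((IsPolyFn.proj i).sup (.const _)).inf (.const _)),
        fun x hx => ?_, fun x hx => ?_⟩
      · beta_reduce
        try simp only [← top_def, ← bot_def] at hx
        rw [hx, mid_sup_mid (fun hx => hc hx.symm), top_inf_eq,
          mid_sup_mid (fun hx => hd.1 hx.symm)]
      · beta_reduce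
        try simp only [← top_def, ← bot_def] at hx
        rw [hx, bot_sup_eq, bot_sup_eq, mid_inf_mid (fun hx => hd.2 hx.symm)]
    | mid m' =>
      have hmm : m ≠ m' := fun he => h (le_of_eq (by rw [he]))
      obtain ⟨e, he⟩ := exists_fresh ({m, m'} : Finset A)
      simp only [Finset.mem_insert, Finset.mem_singleton, not_or] at he
      refine ⟨fun x => (x i ⊓ mid m) ⊔ ((x i ⊔ mid m') ⊓ mid e),
        ((IsPolyFn.proj i).inf (.const _)).sup
          (((IsPolyFn.proj i).sup (.const _)).inf (.const _)),
        fun x hx => ?_, fun x hx => ?_⟩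
      · beta_reduce
        try simp only [← top_def, ← bot_def] at hx
        rw [hx, inf_idem, mid_sup_mid hmm, top_inf_eq, mid_sup_mid (fun hx => he.1 hx.symm)]
      · beta_reduce
        try simp only [← top_def, ← bot_def] at hx
        rw [hx, mid_inf_mid (Ne.symm hmm), sup_idem, mid_inf_mid (fun hx => he.2 hx.symm),
          bot_sup_eq]

lemma isPolyFn_finset_sup {n : ℕ} {ι : Type*} (s : Finset ι)
    (F : ι → (Fin n → MA A) → MA A) (hF : ∀ a ∈ s, IsPolyFn (MA A) n (F a)) :
    IsPolyFn (MA A) n (fun x => s.sup (fun a => F a x)) := by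
  classical
  induction s using Finset.cons_induction with
  | empty => simpa using IsPolyFn.const (⊥ : MA A)
  | cons a s ha ih =>
    simp only [Finset.sup_cons]
    exact (hF a (Finset.mem_cons_self a s)).sup
      (ih (fun b hb => hF b (Finset.mem_cons_of_mem hb)))

lemma isPolyFn_finset_inf {n : ℕ} {ι : Type*} (s : Finset ι)
    (F : ι → (Fin n → MA A) → MA A) (hF : ∀ a ∈ s, IsPolyFn (MA A) n (F a)) :
    IsPolyFn (MA A) n (fun x => s.inf (fun a => F a x)) := by
  classical
  induction s using Finset.cons_induction with
  | empty => simpa using IsPolyFn.const (⊤ : MA A)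
  | cons a s ha ih =>
    simp only [Finset.inf_cons]
    exact (hF a (Finset.mem_cons_self a s)).inf
      (ih (fun b hb => hF b (Finset.mem_cons_of_mem hb)))

lemma interpolation [Infinite A] (n : ℕ) (f : (Fin n → MA A) → MA A) (hf : Monotone f)
    (S : Set (Fin n → MA A)) (hS : S.Finite) :
    ∃ p, IsPolyFn (MA A) n p ∧ ∀ a ∈ S, p a = f a := by
  classical
  set T := hS.toFinset with hT
  have key : ∀ a b : Fin n → MA A, ∃ q, IsPolyFn (MA A) n q ∧ q a = ⊤ ∧
      (¬ a ≤ b → q b = ⊥) := by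
    intro a b
    by_cases hab : a ≤ b
    · exact ⟨fun _ => ⊤, .const ⊤, rfl, fun h => absurd hab h⟩
    · have : ∃ i, ¬ a i ≤ b i := by
        by_contra hcon
        push_neg at hcon
        exact hab (fun i => hcon i)
      obtain ⟨i, hi⟩ := this
      obtain ⟨q, hq, hqa, hqb⟩ := exists_gadget i (a i) (b i) hi
      exact ⟨q, hq, hqa a rfl, fun _ => hqb b rfl⟩
  choose q hq hqa hqb using key
  refine ⟨fun x => T.sup (fun a => f a ⊓ T.inf (fun b => q a b x)), ?_, ?_⟩
  · apply isPolyFn_finset_sup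
    intro a _
    exact (IsPolyFn.const (f a)).inf (isPolyFn_finset_inf T _ (fun b _ => hq a b))
  · intro b hb
    have hbT : b ∈ T := by rw [hT]; exact hS.mem_toFinset.mpr hb
    apply le_antisymm
    · apply Finset.sup_le
      intro a haT
      by_cases hab : a ≤ b
      · exact inf_le_left.trans (hf hab)
      · have h1 : T.inf (fun b' => q a b' b) ≤ q a b b := Finset.inf_le hbT
        rw [hqb a b hab] at h1
        exact le_trans (inf_le_right.trans h1) bot_le
    · have h1 : (T.inf fun b' => q b b' b) = ⊤ := by
        apply le_antisymm le_top
        exact Finset.le_inf (fun b' _ => le_of_eq (hqa b b').symm)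
      have h2 := Finset.le_sup (f := fun a => f a ⊓ T.inf (fun b' => q a b' b)) hbT
      simp only [h1, inf_top_eq] at h2
      beta_reduce
      exact h2

end MA

namespace MA
variable {A : Type u}

lemma map_mid (σ : A → A) (a : A) : map σ (mid a) = mid (σ a) := rfl

lemma not_opc [Infinite A] :
    ¬(∀ (n : ℕ) (f : (Fin n → MA A) → MA A), Monotone f → IsPolyFn (MA A) n f) := by
  classical
  intro hopc
  set e := Infinite.natEmbedding A with he
  set g : MA A → MA A := fun z =>
    match z with
    | bot => ⊥
    | top => ⊤
    | mid a => if h : ∃ k, e k = a then mid (e (h.choose + 1)) else ⊥ with hg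
  have hgmono : Monotone g := by
    intro x y hxy
    cases x with
    | bot => exact bot_le
    | top => cases y with
      | top => exact le_refl _
      | bot => exact absurd hxy (by simp [le_iff, MA.le])
      | mid a => exact absurd hxy (by simp [le_iff, MA.le])
    | mid a => cases y with
      | bot => exact absurd hxy (by simp [le_iff, MA.le])
      | top => exact le_top
      | mid b =>
        have : a = b := hxy
        rw [this]
  have hgval : ∀ k : ℕ, g (mid (e k)) = mid (e (k + 1)) := by
    intro k
    have hex : ∃ j, e j = e k := ⟨k, rfl⟩
    have : g (mid (e k)) = mid (e (hex.choose + 1)) := by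
      simp only [hg]
      rw [dif_pos hex]
    rw [this, e.injective hex.choose_spec]
  set f : (Fin 1 → MA A) → MA A := fun x => g (x 0) with hf
  have hfmono : Monotone f := fun x y hxy => hgmono (hxy 0)
  have hpoly : IsPolyFn (MA A) 1 f := hopc 1 f hfmono
  obtain ⟨C, hC⟩ := poly_comm hpoly
  -- pick fresh indices
  set D : Finset ℕ := C.preimage e (e.injective.injOn) with hD
  set N : ℕ := D.sup id + 1 with hN
  have hfreshidx : ∀ k, N ≤ k → e k ∉ C := by
    intro k hk hmem
    have : k ∈ D := Finset.mem_preimage.mpr hmem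
    have := Finset.le_sup (f := id) this
    simp only [id] at this
    omega
  set σ : A → A := ⇑(Equiv.swap (e N) (e (N + 2))) with hσ
  have hσinj : Function.Injective σ := (Equiv.swap _ _).injective
  have hσfix : ∀ c ∈ C, σ c = c := by
    intro c hc
    apply Equiv.swap_apply_of_ne_of_ne
    · intro hcon; exact hfreshidx N le_rfl (hcon ▸ hc)
    · intro hcon; exact hfreshidx (N + 2) (by omega) (hcon ▸ hc)
  have key := hC σ hσinj hσfix (fun _ => mid (e N))
  have hl : (fun i => map σ ((fun _ => mid (e N)) i)) = fun _ : Fin 1 => mid (e (N + 2)) := by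
    funext i
    simp only [map_mid]
    rw [hσ, Equiv.swap_apply_left]
  rw [hl] at key
  have hL : f (fun _ => mid (e (N + 2))) = mid (e (N + 3)) := by
    rw [hf]; beta_reduce; rw [hgval (N + 2)]
  have hR : map σ (f fun _ => mid (e N)) = mid (e (N + 1)) := by
    have : f (fun _ => mid (e N)) = mid (e (N + 1)) := by
      rw [hf]; beta_reduce; rw [hgval N]
    rw [this, map_mid]
    congr 1
    apply Equiv.swap_apply_of_ne_of_ne
    · intro hcon; exact absurd (e.injective hcon) (by omega)
    · intro hcon; exact absurd (e.injective hcon) (by omega)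
  rw [hL, hR] at key
  have : e (N + 3) = e (N + 1) := by injection key
  have := e.injective this
  omega

end MA

/-- For every infinite set `A`, the bounded lattice `M_A` (the antichain `A` together with a
bottom and a top element) is simple, satisfies Wille's property and has the interpolation
property, but is not order-polynomially complete. -/
theorem MA_simple_wille_ip_not_opc (A : Type u) [Infinite A] :
    IsSimpleLattice (MA A) ∧
    WilleProperty (MA A) ∧
    (∀ (n : ℕ) (f : (Fin n → MA A) → MA A), Monotone f →
      ∀ S : Set (Fin n → MA A), S.Finite →
        ∃ p, IsPolyFn (MA A) n p ∧ ∀ a ∈ S, p a = f a) ∧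
    ¬(∀ (n : ℕ) (f : (Fin n → MA A) → MA A), Monotone f → IsPolyFn (MA A) n f) := by
  exact ⟨MA.simple, MA.wille, fun n f hf S hS => MA.interpolation n f hf S hS, MA.not_opc⟩
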